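/- Let m ≥ 2, ν = m/2 − 1, c_ν = ν + 1/2, c̄_ν = ν + 3/2. Let Π be the von Mises–Fisher distribution on the unit sphere S^{m−1} ⊂ ℝ^m with mean direction μ ∈ S^{m−1} and concentration κ ≥ 0, i.e. the probability measure with density with respect to the uniform probability measure on S^{m−1} proportional to exp(κ·⟨μ,β⟩). Then the circular variance satisfies 1 − ⟨μ, ∫_{S^{m−1}} β dΠ(β)⟩ ≤ (c_ν + √(κ² + c̄_ν²) − κ) / (c_ν + √(κ² + c̄_ν²)). -/

import Mathlib

open MeasureTheory
open scoped RealInnerProductSpace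

/-- The uniform probability measure on the unit sphere of `ℝ^m`. -/
noncomputable def uniformSphere (m : ℕ) :
    Measure (Metric.sphere (0 : EuclideanSpace ℝ (Fin m)) 1) :=
  ((volume : Measure (EuclideanSpace ℝ (Fin m))).toSphere Set.univ)⁻¹ •
    (volume : Measure (EuclideanSpace ℝ (Fin m))).toSphere

/-- The von Mises–Fisher distribution on the unit sphere of `ℝ^m` with mean direction `μ`
and concentration `κ`: its density with respect to the uniform probability measure is
proportional to `exp(κ·⟨μ,β⟩)`. -/
noncomputable def vMF (m : ℕ) (κ : ℝ)
    (μ : Metric.sphere (0 : EuclideanSpace ℝ (Fin m)) 1) :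
    Measure (Metric.sphere (0 : EuclideanSpace ℝ (Fin m)) 1) :=
  (uniformSphere m).withDensity fun β =>
    ENNReal.ofReal
      (Real.exp (κ * ⟪(μ : EuclideanSpace ℝ (Fin m)), (β : EuclideanSpace ℝ (Fin m))⟫) /
        ∫ β', Real.exp
          (κ * ⟪(μ : EuclideanSpace ℝ (Fin m)), (β' : EuclideanSpace ℝ (Fin m))⟫)
          ∂(uniformSphere m))

namespace VMFAux

open Metric Set
open scoped ENNReal Pointwise

variable {m : ℕ}

local notation "E'" => EuclideanSpace ℝ (Fin m)
local notation "S'" => Metric.sphere (0 : EuclideanSpace ℝ (Fin m)) 1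

/-! ### The uniform measure is a probability measure -/

lemma toSphere_univ_pos (hm : 1 ≤ m) :
    (volume : Measure (EuclideanSpace ℝ (Fin m))).toSphere Set.univ ≠ 0 := by
  haveI : Nonempty (Fin m) := ⟨⟨0, hm⟩⟩
  rw [Measure.toSphere_apply_univ]
  refine mul_ne_zero ?_ ?_
  · simp [finrank_euclideanSpace]
    omega
  · exact (measure_ball_pos _ _ one_pos).ne'

lemma toSphere_univ_ne_top :
    (volume : Measure (EuclideanSpace ℝ (Fin m))).toSphere Set.univ ≠ ⊤ :=
  (measure_lt_top _ _).ne

lemma uniformSphere_univ (hm : 1 ≤ m) : uniformSphere m Set.univ = 1 := by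
  rw [uniformSphere, Measure.smul_apply, smul_eq_mul,
    ENNReal.inv_mul_cancel (toSphere_univ_pos hm) toSphere_univ_ne_top]

lemma isProbabilityMeasure_uniformSphere (hm : 1 ≤ m) :
    IsProbabilityMeasure (uniformSphere m) := ⟨uniformSphere_univ hm⟩

/-! ### Rotation invariance -/

/-- Restriction of a linear isometry equivalence to the unit sphere. -/
noncomputable def sphereMap (e : EuclideanSpace ℝ (Fin m) ≃ₗᵢ[ℝ] EuclideanSpace ℝ (Fin m))
    (β : Metric.sphere (0 : EuclideanSpace ℝ (Fin m)) 1) :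
    Metric.sphere (0 : EuclideanSpace ℝ (Fin m)) 1 :=
  ⟨e β, by
    have := β.2
    simp only [mem_sphere_iff_norm, sub_zero] at this ⊢
    simpa using this⟩

lemma continuous_sphereMap (e : EuclideanSpace ℝ (Fin m) ≃ₗᵢ[ℝ] EuclideanSpace ℝ (Fin m)) :
    Continuous (sphereMap e) :=
  Continuous.subtype_mk (e.continuous.comp continuous_subtype_val) _

lemma image_coe_preimage_sphereMap
    (e : EuclideanSpace ℝ (Fin m) ≃ₗᵢ[ℝ] EuclideanSpace ℝ (Fin m))
    (s : Set (Metric.sphere (0 : EuclideanSpace ℝ (Fin m)) 1)) :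
    (Subtype.val '' (sphereMap e ⁻¹' s)) = e ⁻¹' (Subtype.val '' s) := by
  ext x
  constructor
  · rintro ⟨b, hb, rfl⟩
    exact ⟨sphereMap e b, hb, rfl⟩
  · rintro ⟨b, hb, hbe⟩
    have hx : x ∈ Metric.sphere (0 : EuclideanSpace ℝ (Fin m)) 1 := by
      have hb2 := b.2
      simp only [mem_sphere_iff_norm, sub_zero] at hb2 ⊢
      rw [← e.norm_map x, ← hbe]
      exact hb2
    refine ⟨⟨x, hx⟩, ?_, rfl⟩
    have : sphereMap e ⟨x, hx⟩ = b := Subtype.ext hbe.symm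
    rw [mem_preimage, this]; exact hb

lemma smul_preimage (e : EuclideanSpace ℝ (Fin m) ≃ₗᵢ[ℝ] EuclideanSpace ℝ (Fin m))
    (A : Set (EuclideanSpace ℝ (Fin m))) :
    (Ioo (0:ℝ) 1) • (e ⁻¹' A) = e ⁻¹' ((Ioo (0:ℝ) 1) • A) := by
  ext x
  simp only [Set.mem_smul, mem_preimage]
  constructor
  · rintro ⟨r, hr, a, ha, rfl⟩
    exact ⟨r, hr, e a, ha, (e.map_smul r a).symm⟩
  · rintro ⟨r, hr, a, ha, hx⟩
    refine ⟨r, hr, e.symm a, by simpa using ha, ?_⟩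
    apply e.injective
    rw [← hx, e.map_smul]
    simp

lemma map_sphereMap_toSphere
    (e : EuclideanSpace ℝ (Fin m) ≃ₗᵢ[ℝ] EuclideanSpace ℝ (Fin m)) :
    Measure.map (sphereMap e) (volume : Measure (EuclideanSpace ℝ (Fin m))).toSphere
      = (volume : Measure (EuclideanSpace ℝ (Fin m))).toSphere := by
  ext s hs
  rw [Measure.map_apply (continuous_sphereMap e).measurable hs,
    Measure.toSphere_apply' _ (hs.preimage (continuous_sphereMap e).measurable),
    Measure.toSphere_apply' _ hs, image_coe_preimage_sphereMap,
    smul_preimage e (Subtype.val '' s)]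
  congr 1
  exact e.measurePreserving.measure_preimage_emb e.toHomeomorph.measurableEmbedding _

lemma map_sphereMap_uniformSphere
    (e : EuclideanSpace ℝ (Fin m) ≃ₗᵢ[ℝ] EuclideanSpace ℝ (Fin m)) :
    Measure.map (sphereMap e) (uniformSphere m) = uniformSphere m := by
  rw [uniformSphere, Measure.map_smul, map_sphereMap_toSphere]

lemma integral_sphereMap (e : EuclideanSpace ℝ (Fin m) ≃ₗᵢ[ℝ] EuclideanSpace ℝ (Fin m))
    (f : S' → ℝ) (hf : Continuous f) :
    ∫ β, f (sphereMap e β) ∂(uniformSphere m) = ∫ β, f β ∂(uniformSphere m) := by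
  conv_rhs => rw [← map_sphereMap_uniformSphere e]
  rw [integral_map (continuous_sphereMap e).aemeasurable]
  rw [map_sphereMap_uniformSphere e]
  exact hf.aestronglyMeasurable

/-! ### Continuity and integrability facts -/

lemma cont_inner (x : EuclideanSpace ℝ (Fin m)) :
    Continuous (fun β : S' => ⟪x, (β : E')⟫) :=
  continuous_const.inner continuous_subtype_val

lemma norm_coe_sphere (β : S') : ‖(β : E')‖ = 1 := by
  have := β.2
  simpa [mem_sphere_iff_norm] using this

lemma abs_inner_le (x : EuclideanSpace ℝ (Fin m)) (β : S') :
    |⟪x, (β : E')⟫| ≤ ‖x‖ := by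
  have := abs_real_inner_le_norm x (β : E')
  simpa [norm_coe_sphere β] using this

lemma integrable_of_continuous (U : Measure S') [IsFiniteMeasure U]
    {F : Type*} [NormedAddCommGroup F] [NormedSpace ℝ F]
    (f : S' → F) (hf : Continuous f) : Integrable f U :=
  hf.integrable_of_hasCompactSupport (HasCompactSupport.of_compactSpace f)

/-! ### Differentiation under the integral sign -/

lemma hasDerivAt_integral_exp (U : Measure S') [IsFiniteMeasure U]
    (x v : EuclideanSpace ℝ (Fin m))
    (g : S' → ℝ) (hg : Continuous g) (C : ℝ) (hC : 0 ≤ C) (hgC : ∀ β, |g β| ≤ C) (u₀ : ℝ) :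
    HasDerivAt (fun u => ∫ β, g β * Real.exp ⟪x + u • v, (β : E')⟫ ∂U)
      (∫ β, (g β * ⟪v, (β : E')⟫) * Real.exp ⟪x + u₀ • v, (β : E')⟫ ∂U) u₀ := by
  have hrw : ∀ (u : ℝ) (β : S'), ⟪x + u • v, (β : E')⟫ = ⟪x, (β:E')⟫ + u * ⟪v, (β:E')⟫ := by
    intro u β
    rw [inner_add_left, real_inner_smul_left]
  have key := hasDerivAt_integral_of_dominated_loc_of_deriv_le
    (F := fun u (β : S') => g β * Real.exp ⟪x + u • v, (β : E')⟫)
    (F' := fun u (β : S') => (g β * ⟪v, (β : E')⟫) * Real.exp ⟪x + u • v, (β : E')⟫)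
    (μ := U) (x₀ := u₀)
    (bound := fun _ => C * ‖v‖ * Real.exp (‖x‖ + (|u₀| + 1) * ‖v‖))
    (Metric.ball_mem_nhds u₀ one_pos) ?_ ?_ ?_ ?_ ?_ ?_
  · exact key.2
  · filter_upwards with u
    exact ((hg.mul (((cont_inner (x + u • v))).rexp)).aestronglyMeasurable)
  · exact integrable_of_continuous U _ (hg.mul ((cont_inner (x + u₀ • v)).rexp))
  · exact ((hg.mul (cont_inner v)).mul ((cont_inner (x + u₀ • v)).rexp)).aestronglyMeasurable
  · filter_upwards with β u hu
    have h1 : |⟪v, (β:E')⟫| ≤ ‖v‖ := abs_inner_le v β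
    have h2 : ⟪x + u • v, (β:E')⟫ ≤ ‖x‖ + (|u₀| + 1) * ‖v‖ := by
      have hcs := real_inner_le_norm (x + u • v) (β : E')
      have hn : ‖x + u • v‖ ≤ ‖x‖ + (|u₀| + 1) * ‖v‖ := by
        refine (norm_add_le _ _).trans ?_
        have : ‖u • v‖ = |u| * ‖v‖ := by simp [norm_smul]
        rw [this]
        have hu' : |u| ≤ |u₀| + 1 := by
          have := mem_ball_iff_norm.1 hu
          have habs : |u - u₀| < 1 := by simpa [Real.norm_eq_abs] using this
          calc |u| = |u₀ + (u - u₀)| := by ring_nf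
          _ ≤ |u₀| + |u - u₀| := abs_add_le _ _
          _ ≤ |u₀| + 1 := by linarith
        nlinarith [norm_nonneg v]
      calc ⟪x + u • v, (β:E')⟫ ≤ ‖x + u • v‖ * ‖(β:E')‖ := hcs
      _ = ‖x + u • v‖ := by rw [norm_coe_sphere]; ring
      _ ≤ _ := hn
    have h3 : Real.exp ⟪x + u • v, (β:E')⟫ ≤ Real.exp (‖x‖ + (|u₀| + 1) * ‖v‖) :=
      Real.exp_le_exp.2 h2
    have h4 : 0 < Real.exp ⟪x + u • v, (β:E')⟫ := Real.exp_pos _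
    calc ‖(g β * ⟪v, (β:E')⟫) * Real.exp ⟪x + u • v, (β:E')⟫‖
        = |g β| * |⟪v, (β:E')⟫| * Real.exp ⟪x + u • v, (β:E')⟫ := by
          rw [Real.norm_eq_abs, abs_mul, abs_mul, Real.abs_exp]
      _ ≤ C * ‖v‖ * Real.exp (‖x‖ + (|u₀| + 1) * ‖v‖) := by
          have h5 : 0 ≤ |⟪v, (β:E')⟫| := abs_nonneg _
          have h6 : 0 ≤ |g β| := abs_nonneg _
          exact mul_le_mul (mul_le_mul (hgC β) h1 h5 hC) h3 h4.le
            (mul_nonneg hC (norm_nonneg _))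
  · exact integrable_const _
  · filter_upwards with β u _
    have h1 : HasDerivAt (fun u : ℝ => ⟪x, (β:E')⟫ + u * ⟪v, (β:E')⟫) ⟪v, (β:E')⟫ u := by
      simpa using ((hasDerivAt_id u).mul_const ⟪v, (β:E')⟫).const_add ⟪x, (β:E')⟫
    have h2 := (h1.exp).const_mul (g β)
    have : (fun u : ℝ => g β * Real.exp (⟪x, (β:E')⟫ + u * ⟪v, (β:E')⟫))
        = fun u : ℝ => g β * Real.exp ⟪x + u • v, (β:E')⟫ := by
      funext u; rw [hrw]
    rw [this] at h2
    refine h2.congr_deriv (Eq.symm ?_)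
    rw [hrw]
    ring

/-! ### The moment functions -/

variable (m) in
/-- `∫ exp (r⟨μ,β⟩) dU`. -/
noncomputable def n0 (μ : Metric.sphere (0 : EuclideanSpace ℝ (Fin m)) 1) (r : ℝ) : ℝ :=
  ∫ β, Real.exp (r * ⟪(μ : E'), (β : E')⟫) ∂(uniformSphere m)

variable (m) in
/-- `∫ ⟨μ,β⟩ exp (r⟨μ,β⟩) dU`. -/
noncomputable def n1 (μ : Metric.sphere (0 : EuclideanSpace ℝ (Fin m)) 1) (r : ℝ) : ℝ :=
  ∫ β, ⟪(μ : E'), (β : E')⟫ * Real.exp (r * ⟪(μ : E'), (β : E')⟫) ∂(uniformSphere m)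

variable (m) in
/-- `∫ ⟨μ,β⟩² exp (r⟨μ,β⟩) dU`. -/
noncomputable def n2 (μ : Metric.sphere (0 : EuclideanSpace ℝ (Fin m)) 1) (r : ℝ) : ℝ :=
  ∫ β, ⟪(μ : E'), (β : E')⟫ ^ 2 * Real.exp (r * ⟪(μ : E'), (β : E')⟫) ∂(uniformSphere m)

lemma inner_smul_add_zero (μ : S') (u : ℝ) (β : S') :
    ⟪(0 : E') + u • (μ : E'), (β : E')⟫ = u * ⟪(μ : E'), (β : E')⟫ := by
  rw [zero_add, real_inner_smul_left]

section derivs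

lemma hasDerivAt_n0 (hm : 1 ≤ m) (μ : S') (r : ℝ) : HasDerivAt (n0 m μ) (n1 m μ r) r := by
  haveI := isProbabilityMeasure_uniformSphere hm
  have key := hasDerivAt_integral_exp (uniformSphere m) 0 (μ : E') (fun _ => 1)
    continuous_const 1 zero_le_one (fun β => by simp) r
  have h1 : (fun u => ∫ β, (1:ℝ) * Real.exp ⟪(0:E') + u • (μ:E'), (β:E')⟫ ∂(uniformSphere m))
      = n0 m μ := by
    funext u
    unfold n0
    congr 1
    funext β
    rw [inner_smul_add_zero, one_mul]
  have h2 : (∫ β, ((1:ℝ) * ⟪(μ:E'), (β:E')⟫) * Real.exp ⟪(0:E') + r • (μ:E'), (β:E')⟫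
      ∂(uniformSphere m)) = n1 m μ r := by
    unfold n1
    congr 1
    funext β
    rw [inner_smul_add_zero, one_mul]
  rw [h1, h2] at key
  exact key

lemma hasDerivAt_n1 (hm : 1 ≤ m) (μ : S') (r : ℝ) : HasDerivAt (n1 m μ) (n2 m μ r) r := by
  haveI := isProbabilityMeasure_uniformSphere hm
  have key := hasDerivAt_integral_exp (uniformSphere m) 0 (μ : E')
    (fun β : S' => ⟪(μ:E'), (β:E')⟫) (cont_inner _) 1 zero_le_one
    (fun β => by simpa [norm_coe_sphere μ] using abs_inner_le (μ : E') β) r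
  have h1 : (fun u => ∫ β, ⟪(μ:E'), (β:E')⟫ * Real.exp ⟪(0:E') + u • (μ:E'), (β:E')⟫
      ∂(uniformSphere m)) = n1 m μ := by
    funext u
    unfold n1
    congr 1
    funext β
    rw [inner_smul_add_zero]
  have h2 : (∫ β, (⟪(μ:E'), (β:E')⟫ * ⟪(μ:E'), (β:E')⟫) *
      Real.exp ⟪(0:E') + r • (μ:E'), (β:E')⟫ ∂(uniformSphere m)) = n2 m μ r := by
    unfold n2
    congr 1
    funext β
    rw [inner_smul_add_zero, sq]
  rw [h1, h2] at key
  exact key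

lemma continuous_n0 (hm : 1 ≤ m) (μ : S') : Continuous (n0 m μ) := by
  have : Differentiable ℝ (n0 m μ) := fun r => (hasDerivAt_n0 hm μ r).differentiableAt
  exact this.continuous

lemma continuous_n1 (hm : 1 ≤ m) (μ : S') : Continuous (n1 m μ) := by
  have : Differentiable ℝ (n1 m μ) := fun r => (hasDerivAt_n1 hm μ r).differentiableAt
  exact this.continuous

lemma n0_pos (hm : 1 ≤ m) (μ : S') (r : ℝ) : 0 < n0 m μ r := by
  haveI := isProbabilityMeasure_uniformSphere hm
  have h1 : ∀ β : S', Real.exp (-|r|) ≤ Real.exp (r * ⟪(μ:E'), (β:E')⟫) := by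
    intro β
    apply Real.exp_le_exp.2
    have := abs_inner_le (μ : E') β
    rw [norm_coe_sphere] at this
    have h2 : |r * ⟪(μ:E'), (β:E')⟫| ≤ |r| := by
      rw [abs_mul]
      nlinarith [abs_nonneg r, abs_nonneg (⟪(μ:E'), (β:E')⟫)]
    nlinarith [abs_nonneg (r * ⟪(μ:E'), (β:E')⟫), neg_abs_le (r * ⟪(μ:E'), (β:E')⟫)]
  have h3 : Real.exp (-|r|) = ∫ _β, Real.exp (-|r|) ∂(uniformSphere m) := by
    simp
  have h4 : ∫ _β, Real.exp (-|r|) ∂(uniformSphere m)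
      ≤ ∫ β, Real.exp (r * ⟪(μ:E'), (β:E')⟫) ∂(uniformSphere m) := by
    apply integral_mono (integrable_const _)
      (integrable_of_continuous _ _ (((cont_inner (μ:E')).const_smul r).rexp)) h1
  calc (0:ℝ) < Real.exp (-|r|) := Real.exp_pos _
  _ ≤ _ := h3.le.trans h4

end derivs

/-! ### Rotational symmetry: the exponential integral is radial -/

lemma norm_smul_sphere (μ : S') (r : ℝ) (hr : 0 ≤ r) : ‖r • (μ : E')‖ = r := by
  rw [norm_smul, norm_coe_sphere, Real.norm_eq_abs, abs_of_nonneg hr, mul_one]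

lemma integral_exp_inner_radial (hm : 1 ≤ m) (μ : S') (x : E') :
    ∫ β, Real.exp ⟪x, (β : E')⟫ ∂(uniformSphere m) = n0 m μ ‖x‖ := by
  have hw : ‖x‖ = ‖(‖x‖ • (μ : E'))‖ := (norm_smul_sphere μ ‖x‖ (norm_nonneg x)).symm
  set w : E' := ‖x‖ • (μ : E') with hwdef
  set e : E' ≃ₗᵢ[ℝ] E' := Submodule.reflection (ℝ ∙ (x - w))ᗮ with hedef
  have hex : e x = w := Submodule.reflection_sub hw
  have hstep : ∀ β : S', ⟪x, (sphereMap e β : E')⟫ = ⟪w, (β : E')⟫ := by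
    intro β
    have h1 : ⟪e x, e (e (β : E'))⟫ = ⟪x, e (β : E')⟫ := e.inner_map_map _ _
    have h2 : e (e (β : E')) = (β : E') := Submodule.reflection_reflection _ _
    rw [h2, hex] at h1
    have : (sphereMap e β : E') = e (β : E') := rfl
    rw [this, ← h1]
  have hcont : Continuous (fun β : S' => Real.exp ⟪x, (β : E')⟫) := (cont_inner x).rexp
  calc ∫ β, Real.exp ⟪x, (β : E')⟫ ∂(uniformSphere m)
      = ∫ β, Real.exp ⟪x, (sphereMap e β : E')⟫ ∂(uniformSphere m) :=
        (integral_sphereMap e _ hcont).symm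
    _ = ∫ β, Real.exp ⟪w, (β : E')⟫ ∂(uniformSphere m) := by
        congr 1; funext β; rw [hstep]
    _ = n0 m μ ‖x‖ := by
        unfold n0
        congr 1; funext β
        rw [hwdef, real_inner_smul_left]

/-! ### The Bessel-type differential identity -/

lemma integral_inner_sq_exp (hm : 1 ≤ m) (μ : S') {κ : ℝ} (hκ : 0 < κ)
    (v : EuclideanSpace ℝ (Fin m)) (hv : ‖v‖ = 1) (hvo : ⟪(μ : E'), v⟫ = 0) :
    ∫ β, ⟪v, (β : E')⟫ ^ 2 * Real.exp (κ * ⟪(μ : E'), (β : E')⟫) ∂(uniformSphere m)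
      = n1 m μ κ / κ := by
  haveI := isProbabilityMeasure_uniformSphere hm
  set U := uniformSphere m with hU
  set r : ℝ → ℝ := fun u => Real.sqrt (κ ^ 2 + u ^ 2) with hrdef
  have hrpos : ∀ u : ℝ, 0 < κ ^ 2 + u ^ 2 := fun u => by positivity
  have hrpos' : ∀ u : ℝ, 0 < r u := fun u => Real.sqrt_pos.2 (hrpos u)
  have hr0 : r 0 = κ := by
    simp only [hrdef]
    rw [show κ ^ 2 + (0:ℝ) ^ 2 = κ ^ 2 by ring, Real.sqrt_sq hκ.le]
  -- the norm computation
  have hnorm : ∀ u : ℝ, ‖κ • (μ : E') + u • v‖ = r u := by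
    intro u
    have h1 : ⟪κ • (μ : E'), u • v⟫ = 0 := by
      rw [real_inner_smul_left, real_inner_smul_right, hvo]; ring
    have h2 : ‖κ • (μ : E') + u • v‖ ^ 2 = κ ^ 2 + u ^ 2 := by
      rw [norm_add_sq_real, h1]
      rw [norm_smul, norm_smul, norm_coe_sphere, hv, Real.norm_eq_abs, Real.norm_eq_abs]
      rw [mul_one, mul_one, sq_abs, sq_abs]
      ring
    show _ = Real.sqrt (κ ^ 2 + u ^ 2)
    rw [← h2, Real.sqrt_sq (norm_nonneg _)]
  -- ψ equals n0 ∘ r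
  have hpsi_eq : (fun u => ∫ β, Real.exp ⟪κ • (μ : E') + u • v, (β : E')⟫ ∂U)
      = fun u => n0 m μ (r u) := by
    funext u
    rw [← hnorm u, ← integral_exp_inner_radial hm μ]
  -- derivative of r
  have hr_deriv : ∀ u : ℝ, HasDerivAt r (u / r u) u := by
    intro u
    have hsq : HasDerivAt (fun u : ℝ => κ ^ 2 + u ^ 2) (2 * u) u := by
      simpa using ((hasDerivAt_pow 2 u).const_add (κ ^ 2))
    have hsqrt := (Real.hasDerivAt_sqrt (hrpos u).ne').comp u hsq
    refine hsqrt.congr_deriv (Eq.symm ?_)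
    rw [show r u = Real.sqrt (κ ^ 2 + u ^ 2) from rfl]
    have hne : Real.sqrt (κ ^ 2 + u ^ 2) ≠ 0 := (hrpos' u).ne'
    field_simp
  -- ψ1 via differentiation under the integral
  set ψ1 : ℝ → ℝ :=
    fun u => ∫ β, ⟪v, (β : E')⟫ * Real.exp ⟪κ • (μ : E') + u • v, (β : E')⟫ ∂U
    with hψ1def
  have hB : ∀ u : ℝ, HasDerivAt
      (fun u => ∫ β, Real.exp ⟪κ • (μ : E') + u • v, (β : E')⟫ ∂U) (ψ1 u) u := by
    intro u
    have key := hasDerivAt_integral_exp U (κ • (μ : E')) v (fun _ => 1) continuous_const 1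
      zero_le_one (fun β => by simp) u
    simp only [one_mul] at key
    exact key
  have hC : ∀ u : ℝ, HasDerivAt (fun u => n0 m μ (r u)) (n1 m μ (r u) * (u / r u)) u := by
    intro u
    exact (hasDerivAt_n0 hm μ (r u)).comp u (hr_deriv u)
  -- uniqueness of derivative: ψ1 has the closed form
  have hD : ∀ u : ℝ, ψ1 u = n1 m μ (r u) * (u / r u) := by
    intro u
    have h1 := hB u
    rw [hpsi_eq] at h1
    exact h1.unique (hC u)
  -- derivative of ψ1 at 0 via differentiation under the integral
  have hE : HasDerivAt ψ1
      (∫ β, (⟪v, (β : E')⟫ * ⟪v, (β : E')⟫) *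
        Real.exp ⟪κ • (μ : E') + (0:ℝ) • v, (β : E')⟫ ∂U) 0 := by
    have key := hasDerivAt_integral_exp U (κ • (μ : E')) v (fun β : S' => ⟪v, (β : E')⟫)
      (cont_inner v) 1 zero_le_one (fun β => by simpa [hv] using abs_inner_le v β) 0
    exact key
  -- derivative of the closed form at 0
  have hF : HasDerivAt (fun u => n1 m μ (r u) * (u / r u)) (n1 m μ κ / κ) 0 := by
    have hf1 : HasDerivAt (fun u => n1 m μ (r u)) (n2 m μ (r 0) * (0 / r 0)) 0 :=
      (hasDerivAt_n1 hm μ (r 0)).comp 0 (hr_deriv 0)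
    have hf2 : HasDerivAt (fun u : ℝ => u / r u) ((1 * r 0 - 0 * (0 / r 0)) / (r 0) ^ 2) 0 :=
      (hasDerivAt_id 0).div (hr_deriv 0) (hrpos' 0).ne'
    have := hf1.mul hf2
    refine this.congr_deriv (Eq.symm ?_)
    rw [hr0]
    field_simp
    ring
  -- conclude by uniqueness
  have hEF : (∫ β, (⟪v, (β : E')⟫ * ⟪v, (β : E')⟫) *
      Real.exp ⟪κ • (μ : E') + (0:ℝ) • v, (β : E')⟫ ∂U) = n1 m μ κ / κ := by
    have h1 : ψ1 = fun u => n1 m μ (r u) * (u / r u) := funext hD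
    rw [h1] at hE
    exact hE.unique hF
  rw [← hEF]
  congr 1; funext β
  rw [zero_smul, add_zero, real_inner_smul_left, sq]

lemma sum_inner_sq (b : OrthonormalBasis (Fin m) ℝ (EuclideanSpace ℝ (Fin m))) (β : S') :
    ∑ j, ⟪(b j : E'), (β : E')⟫ ^ 2 = 1 := by
  have hβ : ⟪(β : E'), (β : E')⟫ = 1 := by
    rw [real_inner_self_eq_norm_mul_norm, norm_coe_sphere, mul_one]
  have h := b.sum_inner_mul_inner (β : E') (β : E')
  rw [hβ] at h
  calc ∑ j, ⟪(b j : E'), (β : E')⟫ ^ 2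
      = ∑ j, ⟪(β : E'), (b j : E')⟫ * ⟪(b j : E'), (β : E')⟫ := by
        apply Finset.sum_congr rfl
        intro j _
        rw [sq]
        congr 1
        exact real_inner_comm _ _
    _ = 1 := h

lemma bessel_identity (hm : 2 ≤ m) (μ : S') {κ : ℝ} (hκ : 0 < κ) :
    n0 m μ κ = n2 m μ κ + ((m : ℝ) - 1) * (n1 m μ κ / κ) := by
  have hm1 : 1 ≤ m := le_trans (by norm_num) hm
  haveI := isProbabilityMeasure_uniformSphere hm1
  have hcard : Module.finrank ℝ (EuclideanSpace ℝ (Fin m)) = Fintype.card (Fin m) := by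
    simp [finrank_euclideanSpace]
  haveI : NeZero m := ⟨by omega⟩
  have horth : Orthonormal ℝ (Set.restrict {(0 : Fin m)} (fun _ => (μ : E'))) := by
    constructor
    · intro i; exact norm_coe_sphere μ
    · intro i j hij
      exact absurd (Subtype.ext (i.2.trans j.2.symm)) hij
  obtain ⟨b, hb⟩ := horth.exists_orthonormalBasis_extension_of_card_eq hcard
  have hb0 : b 0 = (μ : E') := hb 0 rfl
  -- total integral
  have hcontj : ∀ j : Fin m, Continuous
      (fun β : S' => ⟪(b j : E'), (β : E')⟫ ^ 2 * Real.exp (κ * ⟪(μ : E'), (β : E')⟫)) := by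
    intro j
    exact ((cont_inner (b j)).pow 2).mul ((cont_inner (μ : E')).const_smul κ).rexp
  have htot : ∑ j : Fin m, ∫ β, ⟪(b j : E'), (β : E')⟫ ^ 2 *
      Real.exp (κ * ⟪(μ : E'), (β : E')⟫) ∂(uniformSphere m) = n0 m μ κ := by
    rw [← integral_finset_sum _ (fun j _ => integrable_of_continuous _ _ (hcontj j))]
    unfold n0
    congr 1; funext β
    rw [← Finset.sum_mul, sum_inner_sq b β, one_mul]
  -- the term j = 0
  have hzero : ∫ β, ⟪(b 0 : E'), (β : E')⟫ ^ 2 *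
      Real.exp (κ * ⟪(μ : E'), (β : E')⟫) ∂(uniformSphere m) = n2 m μ κ := by
    unfold n2
    congr 1; funext β
    rw [hb0]
  -- the other terms
  have hother : ∀ j : Fin m, j ≠ 0 → ∫ β, ⟪(b j : E'), (β : E')⟫ ^ 2 *
      Real.exp (κ * ⟪(μ : E'), (β : E')⟫) ∂(uniformSphere m) = n1 m μ κ / κ := by
    intro j hj
    apply integral_inner_sq_exp hm1 μ hκ (b j) (b.orthonormal.1 j)
    rw [← hb0]
    exact b.orthonormal.2 (Ne.symm hj)
  -- put it together
  have hsplit := Finset.add_sum_erase Finset.univ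
    (fun j : Fin m => ∫ β, ⟪(b j : E'), (β : E')⟫ ^ 2 *
      Real.exp (κ * ⟪(μ : E'), (β : E')⟫) ∂(uniformSphere m)) (Finset.mem_univ (0 : Fin m))
  have hconst : ∑ j ∈ Finset.univ.erase (0 : Fin m), (∫ β, ⟪(b j : E'), (β : E')⟫ ^ 2 *
      Real.exp (κ * ⟪(μ : E'), (β : E')⟫) ∂(uniformSphere m))
      = ((m : ℝ) - 1) * (n1 m μ κ / κ) := by
    rw [Finset.sum_congr rfl (fun j hj => hother j (Finset.ne_of_mem_erase hj))]
    rw [Finset.sum_const, Finset.card_erase_of_mem (Finset.mem_univ _), Finset.card_univ]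
    simp only [Fintype.card_fin, nsmul_eq_mul]
    congr 1
    have : (1:ℕ) ≤ m := hm1
    push_cast [Nat.cast_sub this]
    ring
  rw [← htot, ← hsplit]
  beta_reduce
  rw [hzero, hconst]

/-! ### The comparison function -/

/-- The lower-bound candidate for the mean resultant length. -/
noncomputable def phi (c cb κ : ℝ) : ℝ := κ / (c + Real.sqrt (κ ^ 2 + cb ^ 2))

/-- The derivative of `phi`. -/
noncomputable def phi' (c cb κ : ℝ) : ℝ :=
  (c * Real.sqrt (κ ^ 2 + cb ^ 2) + cb ^ 2) /
    (Real.sqrt (κ ^ 2 + cb ^ 2) * (c + Real.sqrt (κ ^ 2 + cb ^ 2)) ^ 2)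

section phi

variable {c cb : ℝ} (hc : 0 < c) (hcb : cb = c + 1)
include hc hcb

lemma sqrt_lb (κ : ℝ) : cb ≤ Real.sqrt (κ ^ 2 + cb ^ 2) := by
  have h1 : cb = Real.sqrt (cb ^ 2) := by
    rw [Real.sqrt_sq (by linarith : (0:ℝ) ≤ cb)]
  rw [h1]
  apply Real.sqrt_le_sqrt
  nlinarith [sq_nonneg κ, Real.sq_sqrt (by positivity : (0:ℝ) ≤ cb ^ 2)]

lemma sqrt_pos' (κ : ℝ) : 0 < Real.sqrt (κ ^ 2 + cb ^ 2) :=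
  lt_of_lt_of_le (by linarith) (sqrt_lb hc hcb κ)

lemma den_pos (κ : ℝ) : 0 < c + Real.sqrt (κ ^ 2 + cb ^ 2) := by
  have := sqrt_pos' hc hcb κ
  linarith

lemma continuous_phi : Continuous (phi c cb) := by
  apply Continuous.div continuous_id
  · exact continuous_const.add
      (Real.continuous_sqrt.comp ((continuous_pow 2).add continuous_const))
  · intro κ
    exact (den_pos hc hcb κ).ne'

lemma hasDerivAt_phi (κ : ℝ) :
    HasDerivAt (phi c cb)
      ((c * Real.sqrt (κ ^ 2 + cb ^ 2) + cb ^ 2) /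
        (Real.sqrt (κ ^ 2 + cb ^ 2) * (c + Real.sqrt (κ ^ 2 + cb ^ 2)) ^ 2)) κ := by
  set s := Real.sqrt (κ ^ 2 + cb ^ 2) with hsdef
  have hspos : 0 < s := sqrt_pos' hc hcb κ
  have hs2 : s ^ 2 = κ ^ 2 + cb ^ 2 :=
    Real.sq_sqrt (by positivity : (0:ℝ) ≤ κ ^ 2 + cb ^ 2)
  have hcb0 : 0 < cb := by rw [hcb]; linarith
  have hsq : HasDerivAt (fun κ : ℝ => κ ^ 2 + cb ^ 2) (2 * κ) κ := by
    simpa using ((hasDerivAt_pow 2 κ).add_const (cb ^ 2))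
  have hsder : HasDerivAt (fun κ : ℝ => Real.sqrt (κ ^ 2 + cb ^ 2)) (κ / s) κ := by
    have h := (Real.hasDerivAt_sqrt (by positivity : κ ^ 2 + cb ^ 2 ≠ 0)).comp κ hsq
    refine h.congr_deriv (Eq.symm ?_)
    rw [← hsdef]
    field_simp
  have hden : HasDerivAt (fun κ : ℝ => c + Real.sqrt (κ ^ 2 + cb ^ 2)) (κ / s) κ :=
    hsder.const_add c
  have h := (hasDerivAt_id κ).div hden (den_pos hc hcb κ).ne'
  refine h.congr_deriv (Eq.symm ?_)
  rw [← hsdef]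
  simp only [id]
  have hcs : c + s ≠ 0 := (den_pos hc hcb κ).ne'
  field_simp
  linear_combination -hs2

lemma subsolution {κ : ℝ} (hκ : 0 ≤ κ) :
    0 ≤ κ - 2 * c * phi c cb κ - κ * (phi' c cb κ + phi c cb κ ^ 2) := by
  unfold phi'
  subst hcb
  set s := Real.sqrt (κ ^ 2 + (c + 1) ^ 2) with hsdef
  have hslb : c + 1 ≤ s := sqrt_lb hc rfl κ
  have hcs : 0 < c + s := den_pos hc rfl κ
  have hspos : 0 < s := sqrt_pos' hc rfl κ
  have hs2 : s ^ 2 = κ ^ 2 + (c + 1) ^ 2 :=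
    Real.sq_sqrt (by positivity : (0:ℝ) ≤ κ ^ 2 + (c + 1) ^ 2)
  have hN : s * (c + s) ^ 2 - 2 * c * s * (c + s) - (c * s + (c + 1) ^ 2) - κ ^ 2 * s
      = (c + 1) * (s - (c + 1)) := by
    linear_combination s * hs2
  have key : κ - 2 * c * phi c (c + 1) κ -
      κ * ((c * s + (c + 1) ^ 2) / (s * (c + s) ^ 2) + phi c (c + 1) κ ^ 2)
      = κ * ((c + 1) * (s - (c + 1))) / (s * (c + s) ^ 2) := by
    rw [← hN]
    unfold phi
    rw [← hsdef]
    field_simp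
    ring
  rw [key]
  apply div_nonneg
  · exact mul_nonneg hκ (mul_nonneg (by linarith) (by linarith))
  · positivity

lemma hasDerivAt_phi' (κ : ℝ) :
    HasDerivAt (phi c cb) (phi' c cb κ) κ := hasDerivAt_phi hc hcb κ

end phi

/-! ### The integrating factor -/

/-- Antiderivative of `phi`. -/
noncomputable def Phi (c cb κ : ℝ) : ℝ := ∫ t in (0:ℝ)..κ, phi c cb t

/-- The integrating factor `exp ∘ Phi`. -/
noncomputable def psi (c cb κ : ℝ) : ℝ := Real.exp (Phi c cb κ)

section psisec

variable {c cb : ℝ} (hc : 0 < c) (hcb : cb = c + 1)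
include hc hcb

lemma hasDerivAt_Phi (κ : ℝ) : HasDerivAt (Phi c cb) (phi c cb κ) κ := by
  have hcont := continuous_phi hc hcb
  exact intervalIntegral.integral_hasDerivAt_right
    (hcont.intervalIntegrable _ _)
    hcont.aestronglyMeasurable.stronglyMeasurableAtFilter
    hcont.continuousAt

lemma hasDerivAt_psi (κ : ℝ) :
    HasDerivAt (psi c cb) (phi c cb κ * psi c cb κ) κ := by
  have h := (hasDerivAt_Phi hc hcb κ).exp
  unfold psi
  rw [mul_comm] at h
  exact h

lemma continuous_psi : Continuous (psi c cb) := by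
  have : Differentiable ℝ (psi c cb) := fun κ => (hasDerivAt_psi hc hcb κ).differentiableAt
  exact this.continuous

lemma hasDerivAt_phipsi (κ : ℝ) :
    HasDerivAt (fun x => phi c cb x * psi c cb x)
      (phi' c cb κ * psi c cb κ + phi c cb κ * (phi c cb κ * psi c cb κ)) κ :=
  (hasDerivAt_phi' hc hcb κ).mul (hasDerivAt_psi hc hcb κ)

end psisec

lemma psi_pos (c cb κ : ℝ) : 0 < psi c cb κ := Real.exp_pos _

/-! ### The Wronskian comparison argument -/

lemma ratio_ge_phi (hm : 2 ≤ m) (μ : S') {c cb : ℝ}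
    (hc : c = ((m : ℝ) - 1) / 2) (hcb : cb = c + 1) {κ : ℝ} (hκ : 0 < κ) :
    phi c cb κ * n0 m μ κ ≤ n1 m μ κ := by
  have hm1 : 1 ≤ m := le_trans (by norm_num) hm
  have hmR : (2:ℝ) ≤ (m:ℝ) := by exact_mod_cast hm
  have hc0 : 0 < c := by rw [hc]; linarith
  set w : ℝ → ℝ := fun x => x ^ (m - 1) *
    (n1 m μ x * psi c cb x - n0 m μ x * (phi c cb x * psi c cb x)) with hwdef
  -- derivative of w at positive points
  have hwd : ∀ x : ℝ, 0 < x → HasDerivAt w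
      ((((m - 1 : ℕ)) : ℝ) * x ^ (m - 1 - 1) *
        (n1 m μ x * psi c cb x - n0 m μ x * (phi c cb x * psi c cb x)) +
       x ^ (m - 1) *
        ((n2 m μ x * psi c cb x + n1 m μ x * (phi c cb x * psi c cb x)) -
         (n1 m μ x * (phi c cb x * psi c cb x) +
          n0 m μ x * (phi' c cb x * psi c cb x + phi c cb x * (phi c cb x * psi c cb x))))) x := by
    intro x _
    have h1 := (hasDerivAt_n1 hm1 μ x).mul (hasDerivAt_psi hc0 hcb x)
    have h2 := (hasDerivAt_n0 hm1 μ x).mul (hasDerivAt_phipsi hc0 hcb x)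
    have h3 := h1.sub h2
    have h4 := (hasDerivAt_pow (m - 1) x).mul h3
    refine h4.congr_deriv (Eq.symm ?_); simp only [Pi.mul_apply, Pi.sub_apply]
  -- nonnegativity of the derivative
  have hwd_nonneg : ∀ x : ℝ, 0 < x →
      0 ≤ (((m - 1 : ℕ) : ℝ) * x ^ (m - 1 - 1) *
        (n1 m μ x * psi c cb x - n0 m μ x * (phi c cb x * psi c cb x)) +
       x ^ (m - 1) *
        ((n2 m μ x * psi c cb x + n1 m μ x * (phi c cb x * psi c cb x)) -
         (n1 m μ x * (phi c cb x * psi c cb x) +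
          n0 m μ x * (phi' c cb x * psi c cb x + phi c cb x * (phi c cb x * psi c cb x))))) := by
    intro x hx
    have hbes := bessel_identity hm μ hx
    have hn2 : n2 m μ x = n0 m μ x - ((m : ℝ) - 1) * (n1 m μ x / x) := by linarith
    have hcast : (((m - 1 : ℕ)) : ℝ) = (m : ℝ) - 1 := by
      push_cast [Nat.cast_sub hm1]
      ring
    have hpow : x ^ (m - 1) = x * x ^ (m - 1 - 1) := by
      rw [← pow_succ']
      congr 1
      omega
    have h2c : (m : ℝ) - 1 = 2 * c := by rw [hc]; ring
    have hfact : (((m - 1 : ℕ) : ℝ) * x ^ (m - 1 - 1) *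
        (n1 m μ x * psi c cb x - n0 m μ x * (phi c cb x * psi c cb x)) +
       x ^ (m - 1) *
        ((n2 m μ x * psi c cb x + n1 m μ x * (phi c cb x * psi c cb x)) -
         (n1 m μ x * (phi c cb x * psi c cb x) +
          n0 m μ x * (phi' c cb x * psi c cb x + phi c cb x * (phi c cb x * psi c cb x)))))
        = x ^ (m - 1 - 1) * psi c cb x * n0 m μ x *
          (x - 2 * c * phi c cb x - x * (phi' c cb x + phi c cb x ^ 2)) := by
      rw [hn2, hcast, hpow, h2c]
      field_simp
      ring
    rw [hfact]
    have hsub := subsolution hc0 hcb hx.le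
    have h1 : (0:ℝ) ≤ x ^ (m - 1 - 1) := le_of_lt (pow_pos hx _)
    have h2 := psi_pos c cb x
    have h3 := n0_pos hm1 μ x
    apply mul_nonneg (mul_nonneg (mul_nonneg h1 h2.le) h3.le) hsub
  -- continuity of w
  have hw_cont : Continuous w := by
    apply (continuous_pow _).mul
    exact ((continuous_n1 hm1 μ).mul (continuous_psi hc0 hcb)).sub
      ((continuous_n0 hm1 μ).mul ((continuous_phi hc0 hcb).mul (continuous_psi hc0 hcb)))
  -- monotonicity
  have hmono : MonotoneOn w (Set.Icc 0 κ) := by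
    apply monotoneOn_of_deriv_nonneg (convex_Icc 0 κ) hw_cont.continuousOn
    · intro x hx
      rw [interior_Icc] at hx
      exact ((hwd x hx.1).differentiableAt).differentiableWithinAt
    · intro x hx
      rw [interior_Icc] at hx
      rw [(hwd x hx.1).deriv]
      exact hwd_nonneg x hx.1
  have hw0 : w 0 = 0 := by
    simp only [hwdef]
    rw [zero_pow (by omega : m - 1 ≠ 0), zero_mul]
  have hwκ : 0 ≤ w κ := by
    rw [← hw0]
    exact hmono (Set.mem_Icc.2 ⟨le_rfl, hκ.le⟩) (Set.mem_Icc.2 ⟨hκ.le, le_rfl⟩) hκ.le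
  -- conclude
  have hw_eq : w κ = κ ^ (m - 1) *
      ((n1 m μ κ - n0 m μ κ * phi c cb κ) * psi c cb κ) := by
    simp only [hwdef]
    ring
  rw [hw_eq] at hwκ
  have h3 : 0 ≤ (n1 m μ κ - n0 m μ κ * phi c cb κ) * psi c cb κ :=
    (mul_nonneg_iff_of_pos_left (pow_pos hκ (m - 1))).mp hwκ
  have h4 : 0 ≤ n1 m μ κ - n0 m μ κ * phi c cb κ :=
    (mul_nonneg_iff_of_pos_right (psi_pos c cb κ)).mp h3
  linarith

/-! ### Symmetry at κ = 0 -/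

lemma n1_zero (hm : 1 ≤ m) (μ : S') : n1 m μ 0 = 0 := by
  haveI := isProbabilityMeasure_uniformSphere hm
  set e : E' ≃ₗᵢ[ℝ] E' := LinearIsometryEquiv.neg ℝ with he
  have hneg : ∀ β : S', (sphereMap e β : E') = -(β : E') := fun β => rfl
  have h := integral_sphereMap (m := m) e
    (fun β : S' => ⟪(μ : E'), (β : E')⟫) (cont_inner _)
  have h2 : ∫ β, ⟪(μ : E'), (sphereMap e β : E')⟫ ∂(uniformSphere m)
      = - ∫ β, ⟪(μ : E'), (β : E')⟫ ∂(uniformSphere m) := by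
    rw [← integral_neg]
    congr 1; funext β
    rw [hneg, inner_neg_right]
  have hn1 : n1 m μ 0 = ∫ β, ⟪(μ : E'), (β : E')⟫ ∂(uniformSphere m) := by
    unfold n1
    congr 1; funext β
    rw [zero_mul, Real.exp_zero, mul_one]
  rw [hn1]
  rw [h2] at h
  linarith

/-! ### The mean resultant length of the vMF distribution -/

lemma mean_inner (hm : 1 ≤ m) (κ : ℝ) (μ : S') :
    ⟪(μ : E'), ∫ β, (β : E') ∂(vMF m κ μ)⟫ = n1 m μ κ / n0 m μ κ := by
  haveI := isProbabilityMeasure_uniformSphere hm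
  set d : S' → ℝ := fun β => Real.exp (κ * ⟪(μ : E'), (β : E')⟫) / n0 m μ κ with hd
  have hd_cont : Continuous d := (((cont_inner (μ : E')).const_smul κ).rexp).div_const _
  have hd_nonneg : ∀ β, 0 ≤ d β := fun β =>
    div_nonneg (Real.exp_pos _).le (n0_pos hm μ κ).le
  have h1 : vMF m κ μ = (uniformSphere m).withDensity
      (fun β => ((d β).toNNReal : ℝ≥0∞)) := rfl
  rw [h1, integral_withDensity_eq_integral_smul hd_cont.measurable.real_toNNReal]
  have h2 : (fun β : S' => (d β).toNNReal • (β : E')) = fun β : S' => d β • (β : E') := by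
    funext β
    rw [NNReal.smul_def, Real.coe_toNNReal _ (hd_nonneg β)]
  rw [h2]
  have hint : Integrable (fun β : S' => d β • (β : E')) (uniformSphere m) :=
    integrable_of_continuous _ _ (hd_cont.smul continuous_subtype_val)
  have h3 := (ContinuousLinearMap.integral_comp_comm (innerSL ℝ (μ : E')) hint).symm
  have h4 : ⟪(μ : E'), ∫ β, d β • (β : E') ∂(uniformSphere m)⟫
      = ∫ β, ⟪(μ : E'), d β • (β : E')⟫ ∂(uniformSphere m) := h3
  rw [h4]
  have h5 : (fun β : S' => ⟪(μ : E'), d β • (β : E')⟫)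
      = fun β : S' => (⟪(μ : E'), (β : E')⟫ *
          Real.exp (κ * ⟪(μ : E'), (β : E')⟫)) / n0 m μ κ := by
    funext β
    rw [real_inner_smul_right, hd]
    ring
  rw [h5, integral_div]
  rfl

end VMFAux

/-- Upper bound on the circular variance of a von Mises–Fisher distribution with mean
direction `μ` and concentration `κ ≥ 0` on the unit sphere of `ℝ^m`, `m ≥ 2`:
`1 − ⟨μ, E_Π[β]⟩ ≤ (c_ν + √(κ² + c̄_ν²) − κ)/(c_ν + √(κ² + c̄_ν²))` where
`ν = m/2 − 1`, `c_ν = ν + 1/2` and `c̄_ν = ν + 3/2`. -/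
theorem stmt_4 (m : ℕ) (hm : 2 ≤ m) (ν cν cbν : ℝ)
    (hν : ν = (m : ℝ) / 2 - 1) (hcν : cν = ν + 1 / 2) (hcbν : cbν = ν + 3 / 2)
    (κ : ℝ) (hκ : 0 ≤ κ) (μ : Metric.sphere (0 : EuclideanSpace ℝ (Fin m)) 1) :
    1 - ⟪(μ : EuclideanSpace ℝ (Fin m)),
        ∫ β, (β : EuclideanSpace ℝ (Fin m)) ∂(vMF m κ μ)⟫ ≤
      (cν + Real.sqrt (κ ^ 2 + cbν ^ 2) - κ) / (cν + Real.sqrt (κ ^ 2 + cbν ^ 2)) := by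
  have hm1 : 1 ≤ m := by omega
  have hmR : (2 : ℝ) ≤ (m : ℝ) := by exact_mod_cast hm
  have hcν' : cν = ((m : ℝ) - 1) / 2 := by rw [hcν, hν]; ring
  have hc0 : 0 < cν := by rw [hcν']; linarith
  have hcb : cbν = cν + 1 := by rw [hcbν, hcν, hν]; ring
  have hcs : 0 < cν + Real.sqrt (κ ^ 2 + cbν ^ 2) := VMFAux.den_pos hc0 hcb κ
  have hn0pos := VMFAux.n0_pos hm1 μ κ
  rw [VMFAux.mean_inner hm1 κ μ]
  have hratio : VMFAux.phi cν cbν κ ≤ VMFAux.n1 m μ κ / VMFAux.n0 m μ κ := by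
    rcases eq_or_lt_of_le hκ with h0 | hpos
    · rw [← h0]
      have hz : VMFAux.phi cν cbν 0 = 0 := by
        unfold VMFAux.phi
        rw [zero_div]
      rw [hz, VMFAux.n1_zero hm1 μ, zero_div]
    · have h := VMFAux.ratio_ge_phi hm μ hcν' hcb hpos
      rw [le_div_iff₀ hn0pos]
      exact h
  have hphi : VMFAux.phi cν cbν κ = κ / (cν + Real.sqrt (κ ^ 2 + cbν ^ 2)) := rfl
  rw [hphi] at hratio
  have hfinal : (cν + Real.sqrt (κ ^ 2 + cbν ^ 2) - κ) / (cν + Real.sqrt (κ ^ 2 + cbν ^ 2))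
      = 1 - κ / (cν + Real.sqrt (κ ^ 2 + cbν ^ 2)) := by
    field_simp
  rw [hfinal]
  linarith
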